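/- A group E is isomorphic to a crossed product of a finite cyclic group of order n by the infinite cyclic group (equivalently, E has a normal subgroup N isomorphic to ZMod n such that E/N is isomorphic to ℤ) if and only if there exists an integer t with gcd(t, n) = 1 such that E is isomorphic to the presented group on two generators a, g with relators a^n and g^(−1)·a·g·a^(−t). -/

import Mathlib

open SemidirectProduct Multiplicative

namespace CPAux

/-! ### Generic helpers -/

lemma zpow_congr {P : Type*} [Group P] {n : ℕ} {a : P} (ha : a ^ (n : ℤ) = 1)
    {i j : ℤ} (h : (i : ZMod n) = (j : ZMod n)) : a ^ i = a ^ j := by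
  obtain ⟨c, hc⟩ := ((ZMod.intCast_eq_intCast_iff _ _ _).mp h).dvd
  have : j = i + n * c := by linarith
  rw [this, zpow_add, zpow_mul, ha, one_zpow, mul_one]

lemma conj_zpow {P : Type*} [Group P] {n : ℕ} (g : P) (s : ZMod n → P) (u : (ZMod n)ˣ)
    (h : ∀ x, g⁻¹ * s x * g = s ((u : ZMod n) * x)) (k : ℤ) (x : ZMod n) :
    g ^ k * s x * (g ^ k)⁻¹ = s (((u ^ k)⁻¹ : (ZMod n)ˣ) * x) := by
  have h' : ∀ x, g * s x * g⁻¹ = s (((u⁻¹ : (ZMod n)ˣ) : ZMod n) * x) := by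
    intro x
    have := h (((u⁻¹ : (ZMod n)ˣ) : ZMod n) * x)
    rw [← mul_assoc, ← Units.val_mul, mul_inv_cancel, Units.val_one, one_mul] at this
    rw [← this]; group
  induction k using Int.induction_on with
  | zero => simp
  | succ m ih =>
      have hu : u⁻¹ * (u ^ (m : ℤ))⁻¹ = (u ^ ((m : ℤ) + 1))⁻¹ := by group
      calc g ^ ((m : ℤ) + 1) * s x * (g ^ ((m : ℤ) + 1))⁻¹
          = g * (g ^ (m : ℤ) * s x * (g ^ (m : ℤ))⁻¹) * g⁻¹ := by group
        _ = g * s (((u ^ (m : ℤ))⁻¹ : (ZMod n)ˣ) * x) * g⁻¹ := by rw [ih]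
        _ = s ((u⁻¹ : (ZMod n)ˣ) * (((u ^ (m : ℤ))⁻¹ : (ZMod n)ˣ) * x)) := h' _
        _ = s (((u ^ ((m : ℤ) + 1))⁻¹ : (ZMod n)ˣ) * x) := by
            rw [← mul_assoc, ← Units.val_mul, hu]
  | pred m ih =>
      have hu : u * (u ^ (-(m : ℤ)))⁻¹ = (u ^ (-(m : ℤ) - 1))⁻¹ := by group
      calc g ^ (-(m : ℤ) - 1) * s x * (g ^ (-(m : ℤ) - 1))⁻¹
          = g⁻¹ * (g ^ (-(m : ℤ)) * s x * (g ^ (-(m : ℤ)))⁻¹) * g := by group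
        _ = g⁻¹ * s (((u ^ (-(m : ℤ)))⁻¹ : (ZMod n)ˣ) * x) * g := by rw [ih]
        _ = s ((u : ZMod n) * (((u ^ (-(m : ℤ)))⁻¹ : (ZMod n)ˣ) * x)) := h _
        _ = s (((u ^ (-(m : ℤ) - 1))⁻¹ : (ZMod n)ˣ) * x) := by
            rw [← mul_assoc, ← Units.val_mul, hu]

lemma addEquiv_eq_unit_mul {n : ℕ} [NeZero n] (σ : ZMod n ≃+ ZMod n) (x : ZMod n) :
    σ x = σ 1 * x := by
  conv_lhs => rw [← ZMod.natCast_rightInverse x,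
    show ((x.val : ℕ) : ZMod n) = x.val • (1 : ZMod n) by simp, map_nsmul]
  rw [nsmul_eq_mul, ZMod.natCast_rightInverse x, mul_comm]

/-- The unit of `ZMod n` attached to an additive automorphism. -/
def autUnit {n : ℕ} [NeZero n] (σ : ZMod n ≃+ ZMod n) : (ZMod n)ˣ where
  val := σ 1
  inv := σ.symm 1
  val_inv := by rw [← addEquiv_eq_unit_mul σ (σ.symm 1), σ.apply_symm_apply]
  inv_val := by rw [← addEquiv_eq_unit_mul σ.symm (σ 1), σ.symm_apply_apply]

lemma autUnit_spec {n : ℕ} [NeZero n] (σ : ZMod n ≃+ ZMod n) (x : ZMod n) :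
    σ x = ((autUnit σ : (ZMod n)ˣ) : ZMod n) * x := addEquiv_eq_unit_mul σ x

lemma ofAdd_one_zpow {n : ℕ} (m : ℤ) :
    (Multiplicative.ofAdd (1 : ZMod n)) ^ m = Multiplicative.ofAdd ((m : ZMod n)) := by
  rw [← ofAdd_zsmul, zsmul_eq_mul, mul_one]

lemma intCast_val {n : ℕ} [NeZero n] (y : ZMod n) : (((y.val : ℤ) : ZMod n)) = y := by
  push_cast
  exact ZMod.natCast_rightInverse y

/-! ### The model group -/

/-- Turn an additive automorphism into a multiplicative automorphism. -/
def addAutMulAut {A : Type*} [AddGroup A] : Multiplicative (AddAut A) →* MulAut (Multiplicative A) where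
  toFun σ := AddEquiv.toMultiplicative σ.toAdd
  map_one' := rfl
  map_mul' := fun _ _ => rfl

/-- The action of `Multiplicative ℤ` on `Multiplicative (ZMod n)` where the generator
acts by multiplication by `u⁻¹`. -/
def phi (n : ℕ) (u : (ZMod n)ˣ) : Multiplicative ℤ →* MulAut (Multiplicative (ZMod n)) :=
  addAutMulAut.comp ((DistribMulAction.toAddAut (ZMod n)ˣ (ZMod n)).comp
    (zpowersHom (ZMod n)ˣ u⁻¹))

/-- The model group: semidirect product of `ZMod n` with `ℤ`. -/
abbrev Gp (n : ℕ) (u : (ZMod n)ˣ) :=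
  SemidirectProduct (Multiplicative (ZMod n)) (Multiplicative ℤ) (phi n u)

lemma phi_apply {n : ℕ} (u : (ZMod n)ˣ) (k : ℤ) (x : Multiplicative (ZMod n)) :
    phi n u (ofAdd k) x = ofAdd ((((u⁻¹ ^ k : (ZMod n)ˣ) : ZMod n)) * x.toAdd) := rfl

/-! ### The presented group -/

/-- The relator set for the presentation. -/
abbrev Rels (n : ℕ) (t : ℤ) : Set (FreeGroup (Fin 2)) :=
  {FreeGroup.of 0 ^ n,
    (FreeGroup.of 1)⁻¹ * FreeGroup.of 0 * FreeGroup.of 1 * FreeGroup.of 0 ^ (-t)}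

variable {n : ℕ} {t : ℤ}

lemma rel_eq_one {r : FreeGroup (Fin 2)} (hr : r ∈ Rels n t) :
    (QuotientGroup.mk r : PresentedGroup (Rels n t)) = 1 :=
  (QuotientGroup.eq_one_iff r).mpr (Subgroup.subset_normalClosure hr)

/-- `a` in the presented group. -/
def aP (n : ℕ) (t : ℤ) : PresentedGroup (Rels n t) := PresentedGroup.of 0
/-- `g` in the presented group. -/
def gP (n : ℕ) (t : ℤ) : PresentedGroup (Rels n t) := PresentedGroup.of 1

lemma aP_pow : (aP n t) ^ (n : ℤ) = 1 := by
  have := rel_eq_one (n := n) (t := t) (Set.mem_insert _ _)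
  rw [zpow_natCast]
  exact this

lemma gP_conj : (gP n t)⁻¹ * aP n t * gP n t = (aP n t) ^ t := by
  have := rel_eq_one (n := n) (t := t) (Set.mem_insert_of_mem _ rfl)
  have h2 : ((QuotientGroup.mk ((FreeGroup.of 1)⁻¹ * FreeGroup.of 0 * FreeGroup.of 1 *
      FreeGroup.of 0 ^ (-t)) : PresentedGroup (Rels n t))) =
      (gP n t)⁻¹ * aP n t * gP n t * (aP n t) ^ (-t) := rfl
  rw [h2] at this
  have := mul_eq_one_iff_eq_inv.mp this
  rw [this, zpow_neg]
  exact inv_inv _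

/-- The canonical map `Multiplicative (ZMod n) →* PresentedGroup (Rels n t)`. -/
noncomputable def fOne (n : ℕ) (t : ℤ) :
    Multiplicative (ZMod n) →* PresentedGroup (Rels n t) :=
  AddMonoidHom.toMultiplicativeLeft
    (ZMod.lift n ⟨zmultiplesHom (Additive (PresentedGroup (Rels n t)))
        (Additive.ofMul (aP n t)),
      by rw [zmultiplesHom_apply, ← ofMul_zpow, aP_pow]; rfl⟩)

lemma fOne_intCast (m : ℤ) : fOne n t (Multiplicative.ofAdd ((m : ZMod n))) = aP n t ^ m := by
  simp only [fOne, AddMonoidHom.coe_toMultiplicativeLeft, Function.comp_apply, toAdd_ofAdd,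
    ZMod.lift_coe, zmultiplesHom_apply, toMul_zsmul, toMul_ofMul]

lemma fOne_apply [NeZero n] (y : ZMod n) :
    fOne n t (Multiplicative.ofAdd y) = aP n t ^ (y.val : ℤ) := by
  conv_lhs => rw [← intCast_val y]
  exact fOne_intCast _

lemma fOne_step [NeZero n] (u : (ZMod n)ˣ) (hu : ((u : ZMod n)) = (t : ZMod n)) (y : ZMod n) :
    (gP n t)⁻¹ * fOne n t (Multiplicative.ofAdd y) * gP n t
      = fOne n t (Multiplicative.ofAdd ((u : ZMod n) * y)) := by
  rw [fOne_apply, fOne_apply]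
  have h3 : (gP n t)⁻¹ * (aP n t) ^ (y.val : ℤ) * gP n t
      = ((gP n t)⁻¹ * aP n t * gP n t) ^ (y.val : ℤ) := by
    have := map_zpow (MulAut.conj ((gP n t)⁻¹)) (aP n t) (y.val : ℤ)
    simp only [MulAut.conj_apply, inv_inv] at this
    rw [this]
  rw [h3, gP_conj, ← zpow_mul]
  refine zpow_congr aP_pow ?_
  rw [Int.cast_mul, intCast_val, intCast_val, ← hu]

/-! ### The isomorphism between the presented group and the model group -/

/-- The map from the model group to the presented group. -/
noncomputable def psi [NeZero n] (u : (ZMod n)ˣ) (hu : ((u : ZMod n)) = (t : ZMod n)) :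
    Gp n u →* PresentedGroup (Rels n t) :=
  SemidirectProduct.lift (fOne n t) (zpowersHom _ (gP n t)) (by
    intro h
    apply MonoidHom.ext; intro x
    show fOne n t (ofAdd ((((u⁻¹ ^ h.toAdd : (ZMod n)ˣ) : ZMod n)) * x.toAdd))
      = gP n t ^ h.toAdd * fOne n t (ofAdd x.toAdd) * (gP n t ^ h.toAdd)⁻¹
    rw [conj_zpow (gP n t) (fun y => fOne n t (ofAdd y)) u (fOne_step u hu) h.toAdd x.toAdd,
      inv_zpow])

/-- The generators of the model group. -/
def fGen (n : ℕ) (u : (ZMod n)ˣ) : Fin 2 → Gp n u :=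
  ![inl (ofAdd (1 : ZMod n)), inr (ofAdd (1 : ℤ))]

lemma fGen_rels (u : (ZMod n)ˣ) (hu : ((u : ZMod n)) = (t : ZMod n)) :
    ∀ r ∈ Rels n t, FreeGroup.lift (fGen n u) r = 1 := by
  intro r hr
  rcases hr with rfl | hr
  · rw [map_pow, FreeGroup.lift_apply_of]
    show (inl (ofAdd (1 : ZMod n)) : Gp n u) ^ n = 1
    rw [← map_pow, ← ofAdd_nsmul]
    simp
  · rw [Set.mem_singleton_iff] at hr
    subst hr
    simp only [map_mul, map_inv, map_zpow, FreeGroup.lift_apply_of]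
    show (inr (ofAdd (1:ℤ)) : Gp n u)⁻¹ * inl (ofAdd (1 : ZMod n)) * inr (ofAdd (1:ℤ)) *
      (inl (ofAdd (1 : ZMod n))) ^ (-t) = 1
    have h1 : (inr (ofAdd (1:ℤ)) : Gp n u)⁻¹ * inl (ofAdd (1 : ZMod n)) * inr (ofAdd (1:ℤ))
        = inl ((phi n u (ofAdd (1:ℤ)))⁻¹ (ofAdd (1 : ZMod n))) := by
      rw [inl_aut_inv, map_inv]
    have h2 : ((phi n u (ofAdd (1:ℤ)))⁻¹ (ofAdd (1 : ZMod n)))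
        = ofAdd ((u : ZMod n)) := by
      rw [← map_inv, ← ofAdd_neg]
      show ofAdd ((((u⁻¹ ^ (-1 : ℤ) : (ZMod n)ˣ) : ZMod n)) * (1 : ZMod n)) = _
      rw [mul_one, zpow_neg_one, inv_inv]
    rw [h1, h2, ← map_zpow, ← map_mul, ofAdd_one_zpow, ← ofAdd_add, hu]
    show (inl (ofAdd ((t : ZMod n) + ((-t : ℤ) : ZMod n))) : Gp n u) = 1
    rw [Int.cast_neg, add_neg_cancel]
    rfl

/-- The map from the presented group to the model group. -/
def phiHom (u : (ZMod n)ˣ) (hu : ((u : ZMod n)) = (t : ZMod n)) :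
    PresentedGroup (Rels n t) →* Gp n u :=
  PresentedGroup.toGroup (fGen_rels u hu)

/-- The presented group is isomorphic to the model group. -/
noncomputable def lemA [NeZero n] (u : (ZMod n)ˣ) (hu : ((u : ZMod n)) = (t : ZMod n)) :
    PresentedGroup (Rels n t) ≃* Gp n u := by
  refine MonoidHom.toMulEquiv (phiHom u hu) (psi u hu) ?_ ?_
  · -- psi ∘ phiHom = id
    refine PresentedGroup.ext fun i => ?_
    fin_cases i
    · show psi u hu (phiHom u hu (aP n t)) = aP n t
      rw [phiHom, aP, PresentedGroup.toGroup.of]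
      show psi u hu (inl (ofAdd (1 : ZMod n))) = aP n t
      rw [psi, SemidirectProduct.lift_inl,
        show ofAdd (1 : ZMod n) = ofAdd (((1 : ℤ) : ZMod n)) by norm_num, fOne_intCast, zpow_one]
    · show psi u hu (phiHom u hu (gP n t)) = gP n t
      rw [phiHom, gP, PresentedGroup.toGroup.of]
      show psi u hu (inr (ofAdd (1 : ℤ))) = gP n t
      rw [psi, SemidirectProduct.lift_inr, zpowersHom_apply, toAdd_ofAdd, zpow_one]
  · -- phiHom ∘ psi = id
    refine SemidirectProduct.hom_ext ?_ ?_
    · refine MonoidHom.ext fun x => ?_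
      show phiHom u hu (psi u hu (inl x)) = inl x
      rw [psi, SemidirectProduct.lift_inl]
      have : fOne n t x = aP n t ^ (x.toAdd.val : ℤ) := fOne_apply x.toAdd
      rw [this, map_zpow]
      have ha : phiHom u hu (aP n t) = inl (ofAdd (1 : ZMod n)) :=
        PresentedGroup.toGroup.of _
      rw [ha, ← map_zpow, ofAdd_one_zpow, intCast_val]
      rfl
    · refine MonoidHom.ext_mint ?_
      show phiHom u hu (psi u hu (inr (ofAdd (1:ℤ)))) = inr (ofAdd (1:ℤ))
      rw [psi, SemidirectProduct.lift_inr, zpowersHom_apply, toAdd_ofAdd, zpow_one]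
      exact PresentedGroup.toGroup.of _

/-! ### Extension structure of the model group -/

lemma lemB (n : ℕ) (u : (ZMod n)ˣ) :
    ∃ N : Subgroup (Gp n u), ∃ hN : N.Normal,
      Nonempty (N ≃* Multiplicative (ZMod n)) ∧
      (haveI := hN; Nonempty ((Gp n u) ⧸ N ≃* Multiplicative ℤ)) := by
  refine ⟨(rightHom : Gp n u →* Multiplicative ℤ).ker, MonoidHom.normal_ker _, ⟨?_⟩, ⟨?_⟩⟩
  · exact ((MulEquiv.subgroupCongr
      (range_inl_eq_ker_rightHom (φ := phi n u)).symm).trans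
      (MonoidHom.ofInjective (inl_injective (φ := phi n u))).symm)
  · exact QuotientGroup.quotientKerEquivOfSurjective _ rightHom_surjective

/-- Transfer of the extension property along an isomorphism. -/
lemma transfer {E E' : Type*} [Group E] [Group E'] (f : E ≃* E') {n : ℕ}
    (h : ∃ N : Subgroup E', ∃ hN : N.Normal,
      Nonempty (N ≃* Multiplicative (ZMod n)) ∧
      (haveI := hN; Nonempty (E' ⧸ N ≃* Multiplicative ℤ))) :
    ∃ N : Subgroup E, ∃ hN : N.Normal,
      Nonempty (N ≃* Multiplicative (ZMod n)) ∧
      (haveI := hN; Nonempty (E ⧸ N ≃* Multiplicative ℤ)) := by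
  obtain ⟨N', hN', ⟨e⟩, ⟨q⟩⟩ := h
  refine ⟨N'.comap f.toMonoidHom, hN'.comap f.toMonoidHom, ⟨?_⟩, ⟨?_⟩⟩
  · have hmap : (N'.comap f.toMonoidHom).map (f : E →* E') = N' :=
      Subgroup.map_comap_eq_self_of_surjective f.surjective N'
    exact ((f.subgroupMap (N'.comap f.toMonoidHom)).trans
      (MulEquiv.subgroupCongr hmap)).trans e
  · have hmap : (N'.comap f.toMonoidHom).map (f : E →* E') = N' :=
      Subgroup.map_comap_eq_self_of_surjective f.surjective N'
    exact (QuotientGroup.congr _ _ f hmap).trans q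

/-- Units of `ZMod n` from coprime integers. -/
lemma isUnit_of_gcd {n : ℕ} {t : ℤ} (h : Int.gcd t n = 1) : IsUnit ((t : ZMod n)) := by
  obtain ⟨a, b, hab⟩ := Int.isCoprime_iff_gcd_eq_one.mpr h
  refine IsUnit.of_mul_eq_one ((a : ZMod n)) ?_
  have := congrArg (fun z : ℤ => (z : ZMod n)) hab
  push_cast at this
  rw [ZMod.natCast_self] at this
  rw [mul_comm]
  simpa using this

/-! ### Every extension is isomorphic to a model group -/

lemma lemC {n : ℕ} [NeZero n] {E : Type*} [Group E] (N : Subgroup E) [hN : N.Normal]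
    (e : N ≃* Multiplicative (ZMod n)) (q : E ⧸ N ≃* Multiplicative ℤ) :
    ∃ u : (ZMod n)ˣ, Nonempty (E ≃* Gp n u) := by
  classical
  set π : E →* Multiplicative ℤ := q.toMonoidHom.comp (QuotientGroup.mk' N) with hπ_def
  have hker : π.ker = N := by
    ext x
    rw [MonoidHom.mem_ker, hπ_def, MonoidHom.comp_apply, MulEquiv.coe_toMonoidHom,
      MulEquiv.map_eq_one_iff, QuotientGroup.mk'_apply, QuotientGroup.eq_one_iff]
  obtain ⟨g, hg⟩ : ∃ g : E, π g = ofAdd 1 := by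
    obtain ⟨x, hx⟩ := QuotientGroup.mk'_surjective N (q.symm (ofAdd 1))
    refine ⟨x, ?_⟩
    rw [hπ_def, MonoidHom.comp_apply, hx, MulEquiv.coe_toMonoidHom, q.apply_symm_apply]
  set τ : Multiplicative (ZMod n) ≃* Multiplicative (ZMod n) :=
    (e.symm.trans (MulAut.conjNormal (g⁻¹ : E) : N ≃* N)).trans e with hτ_def
  set σ : ZMod n ≃+ ZMod n := MulEquiv.toAdditive τ with hσ_def
  set u : (ZMod n)ˣ := autUnit σ with hu_def
  have hτ : ∀ x : ZMod n, τ (ofAdd x) = ofAdd ((u : ZMod n) * x) := by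
    intro x
    have h1 : σ x = (u : ZMod n) * x := autUnit_spec σ x
    have h2 : τ (ofAdd x) = ofAdd (σ x) := rfl
    rw [h2, h1]
  have hstep : ∀ x : ZMod n,
      g⁻¹ * ((e.symm (ofAdd x) : N) : E) * g = ((e.symm (ofAdd ((u : ZMod n) * x)) : N) : E) := by
    intro x
    have h3 : (e.symm (ofAdd ((u : ZMod n) * x)) : N)
        = MulAut.conjNormal (g⁻¹ : E) (e.symm (ofAdd x)) := by
      rw [← hτ x, hτ_def]
      simp
    rw [h3, MulAut.conjNormal_apply, inv_inv]
  set f₁ : Multiplicative (ZMod n) →* E := N.subtype.comp e.symm.toMonoidHom with hf₁_def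
  have hf₁ : ∀ x : Multiplicative (ZMod n), f₁ x = ((e.symm x : N) : E) := fun _ => rfl
  set Φ : Gp n u →* E := SemidirectProduct.lift f₁ (zpowersHom E g) (by
    intro h
    apply MonoidHom.ext; intro x
    show f₁ (ofAdd ((((u⁻¹ ^ h.toAdd : (ZMod n)ˣ) : ZMod n)) * x.toAdd))
      = g ^ h.toAdd * f₁ (ofAdd x.toAdd) * (g ^ h.toAdd)⁻¹
    rw [conj_zpow g (fun y => f₁ (ofAdd y)) u (fun y => hstep y) h.toAdd x.toAdd, inv_zpow])
    with hΦ_def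
  have hΦinj : Function.Injective Φ := by
    refine (injective_iff_map_eq_one _).mpr fun a ha => ?_
    have ha' : Φ (inl a.left * inr a.right) = 1 := by rwa [inl_left_mul_inr_right]
    rw [map_mul, hΦ_def, SemidirectProduct.lift_inl, SemidirectProduct.lift_inr,
      zpowersHom_apply] at ha'
    have hπa : π (f₁ a.left) = 1 := by
      have : f₁ a.left ∈ π.ker := by rw [hker]; exact (e.symm a.left).2
      exact this
    have hcongr := congrArg π ha'
    rw [map_mul, map_one, hπa, one_mul, map_zpow, hg, ← ofAdd_zsmul, smul_eq_mul,
      mul_one] at hcongr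
    have hk : a.right.toAdd = 0 := by simpa using hcongr
    rw [hk, zpow_zero, mul_one] at ha'
    have hr : a.right = 1 := by
      have := congrArg Multiplicative.ofAdd hk
      simpa using this
    have hl : a.left = 1 := by
      have h5 : (e.symm a.left : N) = 1 := Subtype.ext (by simpa [hf₁] using ha')
      have h6 := congrArg e h5
      rwa [e.apply_symm_apply, map_one] at h6
    have ha2 : a = inl a.left * inr a.right := (inl_left_mul_inr_right a).symm
    rw [ha2, hl, hr, map_one, map_one, one_mul]
  have hΦsur : Function.Surjective Φ := by
    intro y
    set k : ℤ := (π y).toAdd with hk_def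
    have hky : π (y * g ^ (-k)) = 1 := by
      rw [map_mul, map_zpow, hg, ← ofAdd_zsmul, smul_eq_mul, mul_one]
      have hπy : π y = ofAdd k := by rw [hk_def, ofAdd_toAdd]
      rw [hπy, ← ofAdd_add, add_neg_cancel]
      rfl
    have hmem : y * g ^ (-k) ∈ N := by rw [← hker]; exact hky
    refine ⟨inl (e ⟨y * g ^ (-k), hmem⟩) * inr (ofAdd k), ?_⟩
    rw [map_mul, hΦ_def, SemidirectProduct.lift_inl, SemidirectProduct.lift_inr, zpowersHom_apply,
      toAdd_ofAdd, hf₁, e.symm_apply_apply]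
    show (y * g ^ (-k)) * g ^ k = y
    rw [mul_assoc, ← zpow_add, neg_add_cancel, zpow_zero, mul_one]
  exact ⟨u, ⟨(MulEquiv.ofBijective Φ ⟨hΦinj, hΦsur⟩).symm⟩⟩

end CPAux

/-- A group `E` is an extension of a cyclic group of order `n` by the infinite cyclic group
iff it has a presentation `⟨a, g ∣ aⁿ, g⁻¹ a g a⁻ᵗ⟩` for some `t` coprime to `n`. -/
theorem crossed_product_finite_cyclic_by_infinite_cyclic
    (n : ℕ) (hn : 1 ≤ n) (E : Type*) [Group E] :
    (∃ N : Subgroup E, ∃ hN : N.Normal,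
        Nonempty (N ≃* Multiplicative (ZMod n)) ∧
        (haveI := hN; Nonempty (E ⧸ N ≃* Multiplicative ℤ))) ↔
      (∃ t : ℤ, Int.gcd t n = 1 ∧
        Nonempty (E ≃* PresentedGroup
          ({FreeGroup.of 0 ^ n,
            (FreeGroup.of 1)⁻¹ * FreeGroup.of 0 * FreeGroup.of 1 * FreeGroup.of 0 ^ (-t)} :
            Set (FreeGroup (Fin 2))))) := by
  haveI : NeZero n := ⟨by omega⟩
  constructor
  · rintro ⟨N, hN, ⟨e⟩, hquot⟩
    haveI := hN
    obtain ⟨q⟩ := hquot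
    obtain ⟨u, ⟨iso⟩⟩ := CPAux.lemC N e q
    set t : ℤ := (((u : ZMod n).val : ℤ)) with ht_def
    have hu : ((u : ZMod n)) = (t : ZMod n) := (CPAux.intCast_val _).symm
    refine ⟨t, ?_, ⟨iso.trans (CPAux.lemA u hu).symm⟩⟩
    have h1 : Int.gcd t n = Nat.gcd (u : ZMod n).val n := by
      rw [ht_def, Int.gcd, Int.natAbs_natCast, Int.natAbs_natCast]
    rw [h1]
    exact ZMod.val_coe_unit_coprime u
  · rintro ⟨t, hgcd, ⟨iso⟩⟩
    have hU := CPAux.isUnit_of_gcd hgcd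
    have hu : ((hU.unit : ZMod n)) = (t : ZMod n) := hU.unit_spec
    exact CPAux.transfer (iso.trans (CPAux.lemA hU.unit hu)) (CPAux.lemB n hU.unit)
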